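/- Let p be a prime and K an algebraically closed field of characteristic p. Then the homogeneous polynomial X₁^p·X₃ + X₂^{p+1} + X₁·X₃^p in the polynomial ring K[X₁, X₂, X₃] is irreducible. -/

import Mathlib

open MvPolynomial

lemma aux_prime_X0 {K : Type*} [Field K] : Prime (X 0 : MvPolynomial (Fin 2) K) := by
  rw [← MulEquiv.prime_iff (finSuccEquiv K 1).toMulEquiv]
  have : (finSuccEquiv K 1).toMulEquiv (X 0) = Polynomial.X := by
    simpa using finSuccEquiv_X_zero (R := K) (n := 1)
  rw [this]
  exact Polynomial.prime_X

lemma aux_not_dvd {K : Type*} [Field K] : ¬ (X 0 : MvPolynomial (Fin 2) K) ∣ X 1 := by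
  rintro ⟨q, hq⟩
  have := congrArg (eval fun i : Fin 2 => if i = 0 then (0 : K) else 1) hq
  simp at this

lemma aux_factor {p : ℕ} (hp : 2 ≤ p) {K : Type*} [Field K] :
    (X 0 ^ p * X 1 + X 0 * X 1 ^ p : MvPolynomial (Fin 2) K)
      = X 0 * (X 0 ^ (p - 1) * X 1 + X 1 ^ p) := by
  obtain ⟨k, rfl⟩ : ∃ k, p = k + 1 := ⟨p - 1, by omega⟩
  simp only [Nat.add_sub_cancel]
  ring

lemma aux_irred {p : ℕ} (hp : p.Prime) {K : Type*} [Field K] :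
    Irreducible (Polynomial.X ^ (p + 1) +
      Polynomial.C (X 0 ^ p * X 1 + X 0 * X 1 ^ p : MvPolynomial (Fin 2) K)) := by
  set c : MvPolynomial (Fin 2) K := X 0 ^ p * X 1 + X 0 * X 1 ^ p with hc
  have hp2 : 2 ≤ p := hp.two_le
  have hX0 : Prime (X 0 : MvPolynomial (Fin 2) K) := aux_prime_X0
  have hPprime : (Ideal.span {(X 0 : MvPolynomial (Fin 2) K)}).IsPrime :=
    (Ideal.span_singleton_prime hX0.ne_zero).2 hX0
  have hmonic : (Polynomial.X ^ (p + 1) + Polynomial.C c).Monic :=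
    Polynomial.monic_X_pow_add_C c (by omega)
  have hdeg : (Polynomial.X ^ (p + 1) + Polynomial.C c).natDegree = p + 1 :=
    Polynomial.natDegree_X_pow_add_C
  have hEis : (Polynomial.X ^ (p + 1) + Polynomial.C c).IsEisensteinAt
      (Ideal.span {(X 0 : MvPolynomial (Fin 2) K)}) := by
    constructor
    · rw [hmonic.leadingCoeff]
      intro h
      exact hPprime.ne_top (Ideal.eq_top_of_isUnit_mem _ h isUnit_one)
    · intro n hn
      rw [hdeg] at hn
      rw [Polynomial.coeff_add, Polynomial.coeff_X_pow, Polynomial.coeff_C,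
        if_neg (by omega)]
      by_cases h0 : n = 0
      · rw [if_pos h0, zero_add, hc, Ideal.mem_span_singleton, aux_factor hp2]
        exact Dvd.intro _ rfl
      · rw [if_neg h0, add_zero]
        exact Ideal.zero_mem _
    · rw [Polynomial.coeff_add, Polynomial.coeff_X_pow, if_neg (by omega),
        Polynomial.coeff_C, if_pos rfl, zero_add, Ideal.span_singleton_pow,
        Ideal.mem_span_singleton]
      rintro ⟨q, hq⟩
      have h2 : (X 0 : MvPolynomial (Fin 2) K) * (X 0 ^ (p - 1) * X 1 + X 1 ^ p)
          = X 0 * (X 0 * q) := by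
        rw [← aux_factor hp2, ← hc, hq]; ring
      have h3 : (X 0 ^ (p - 1) * X 1 + X 1 ^ p : MvPolynomial (Fin 2) K) = X 0 * q :=
        mul_left_cancel₀ hX0.ne_zero h2
      have h4 : (X 0 : MvPolynomial (Fin 2) K) ∣ X 1 ^ p := by
        have hd : (X 0 : MvPolynomial (Fin 2) K) ∣ X 0 ^ (p - 1) * X 1 :=
          Dvd.dvd.mul_right (dvd_pow_self _ (by omega)) _
        have h5 : (X 1 ^ p : MvPolynomial (Fin 2) K)
            = X 0 * q - X 0 ^ (p - 1) * X 1 := by rw [← h3]; ring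
        rw [h5]; exact dvd_sub (Dvd.intro q rfl) hd
      exact aux_not_dvd (hX0.dvd_of_dvd_pow h4)
  exact hEis.irreducible hPprime hmonic.isPrimitive (by rw [hdeg]; omega)

/-- Let `p` be a prime and `K` an algebraically closed field of
characteristic `p`. Then the homogeneous polynomial `X₁ ^ p * X₃ + X₂ ^ (p+1) + X₁ * X₃ ^ p`
is irreducible in `K[X₁, X₂, X₃]`. -/
theorem stmt17 {p : ℕ} (hp : p.Prime) {K : Type*} [Field K] [IsAlgClosed K] [CharP K p] :
    Irreducible (X 0 ^ p * X 2 + X 1 ^ (p + 1) + X 0 * X 2 ^ p :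
      MvPolynomial (Fin 3) K) := by
  have key := aux_irred hp (K := K)
  set F' : MvPolynomial (Fin 3) K := X 0 ^ (p + 1) + (X 1 ^ p * X 2 + X 1 * X 2 ^ p) with hF'
  have himg : (finSuccEquiv K 2) F' =
      Polynomial.X ^ (p + 1) +
        Polynomial.C (X 0 ^ p * X 1 + X 0 * X 1 ^ p : MvPolynomial (Fin 2) K) := by
    have e1 : (1 : Fin 3) = Fin.succ 0 := rfl
    have e2 : (2 : Fin 3) = Fin.succ 1 := rfl
    rw [hF', e1, e2]
    simp only [map_add, map_mul, map_pow, finSuccEquiv_X_zero, finSuccEquiv_X_succ]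
  have key2 : Irreducible F' := by
    rw [← MulEquiv.irreducible_iff (finSuccEquiv K 2), himg]
    exact key
  have h : (X 0 ^ p * X 2 + X 1 ^ (p + 1) + X 0 * X 2 ^ p : MvPolynomial (Fin 3) K)
      = renameEquiv K (Equiv.swap (0 : Fin 3) 1) F' := by
    rw [renameEquiv_apply, hF', map_add, map_add, map_pow, map_mul, map_mul, map_pow,
      map_pow, rename_X, rename_X, rename_X, Equiv.swap_apply_left, Equiv.swap_apply_right,
      Equiv.swap_apply_of_ne_of_ne (by decide) (by decide)]
    ring
  rw [h, MulEquiv.irreducible_iff (renameEquiv K (Equiv.swap (0 : Fin 3) 1))]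
  exact key2
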